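/- Let A and A′ be two antichains in Φ₁⁺ (with respect to ≤₀) which are both maximal-cardinality orthogonal subsets, in a tube-type Hermitian pair, and suppose Σ_{γ∈A} γ = Σ_{γ′∈A′} γ′. Then A = A′. (Key step: in the bipartite incidence graph of the nonzero-pairing relation between A and A′, every connected component with more than one node must be a cycle alternating between A and A′ with every node of degree 2, and then λ = Σ_{γ_i} − Σ_{γ′_i} has ‖λ‖² = 0, forcing components to be single common roots.) -/

import Mathlib

open scoped RealInnerProductSpace

/-- A finite crystallographic root system in a real inner product space. -/
structure IsRootSystem {V : Type*} [NormedAddCommGroup V] [InnerProductSpace ℝ V]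
    (Φ : Set V) : Prop where
  finite : Φ.Finite
  ne_zero : ∀ α ∈ Φ, α ≠ (0 : V)
  neg_mem : ∀ α ∈ Φ, -α ∈ Φ
  reflect_mem : ∀ α ∈ Φ, ∀ β ∈ Φ, β - (2 * ⟪β, α⟫ / ⟪α, α⟫) • α ∈ Φ
  crystallographic : ∀ α ∈ Φ, ∀ β ∈ Φ, ∃ n : ℤ, 2 * ⟪β, α⟫ / ⟪α, α⟫ = (n : ℝ)

/-- A choice of positive roots for a root system. -/
structure IsPositiveSystem {V : Type*} [NormedAddCommGroup V] [InnerProductSpace ℝ V]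
    (Φ pos : Set V) : Prop where
  subset : pos ⊆ Φ
  mem_or_neg_mem : ∀ α ∈ Φ, α ∈ pos ∨ -α ∈ pos
  not_both : ∀ α ∈ pos, -α ∉ pos
  add_mem : ∀ α ∈ pos, ∀ β ∈ pos, α + β ∈ Φ → α + β ∈ pos

/-- The dominance order defined by `pos0`: `lam ≤₀ mu` iff `mu - lam ∈ ℕ⬝pos0`. -/
def NDom {V : Type*} [AddCommGroup V] (pos0 : Set V) (lam mu : V) : Prop :=
  ∃ l : List V, (∀ γ ∈ l, γ ∈ pos0) ∧ mu - lam = l.sum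

/-- A pairwise orthogonal finite subset of a set `pos1`. -/
def IsOrthSubset {V : Type*} [NormedAddCommGroup V] [InnerProductSpace ℝ V]
    (pos1 : Set V) (S : Finset V) : Prop :=
  ↑S ⊆ pos1 ∧ ∀ α ∈ S, ∀ β ∈ S, α ≠ β → ⟪α, β⟫ = 0

/-- An orthogonal subset of maximal cardinality. -/
def IsMaxOrthSubset {V : Type*} [NormedAddCommGroup V] [InnerProductSpace ℝ V]
    (pos1 : Set V) (S : Finset V) : Prop :=
  IsOrthSubset pos1 S ∧ ∀ T : Finset V, IsOrthSubset pos1 T → T.card ≤ S.card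

/-- An antichain for the dominance order of `pos0`. -/
def IsAntichainDom {V : Type*} [AddCommGroup V] (pos0 : Set V) (S : Finset V) : Prop :=
  ∀ a ∈ S, ∀ a' ∈ S, a ≠ a' → ¬ NDom pos0 a a'

section AuxLemmas
variable {V : Type*} [NormedAddCommGroup V] [InnerProductSpace ℝ V]


lemma aux_inner_self_pos {x : V} (hx : x ≠ 0) : (0:ℝ) < ⟪x, x⟫ := by
  have h : 0 < ‖x‖ := norm_pos_iff.2 hx
  rw [real_inner_self_eq_norm_sq]
  exact pow_pos h 2

lemma aux_inner_list_sum (a : V) (l : List V) :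
    ⟪a, l.sum⟫ = (l.map (fun x => ⟪a, x⟫)).sum := by
  induction l with
  | nil => simp
  | cons b t ih => simp [List.sum_cons, inner_add_right, ih]

lemma aux_root_add {Φ : Set V} (hΦ : IsRootSystem Φ) {α β : V}
    (hα : α ∈ Φ) (hβ : β ∈ Φ) (hneg : ⟪α, β⟫ < 0) (hne : α + β ≠ 0) :
    α + β ∈ Φ := by
  obtain ⟨n, hn⟩ := hΦ.crystallographic α hα β hβ
  obtain ⟨m, hm⟩ := hΦ.crystallographic β hβ α hα
  have hα0 : α ≠ 0 := hΦ.ne_zero α hα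
  have hβ0 : β ≠ 0 := hΦ.ne_zero β hβ
  have hαα : (0:ℝ) < ⟪α, α⟫ := aux_inner_self_pos hα0
  have hββ : (0:ℝ) < ⟪β, β⟫ := aux_inner_self_pos hβ0
  have hba : ⟪β, α⟫ < 0 := by rwa [real_inner_comm]
  have hnneg : (n:ℝ) < 0 := by
    rw [← hn]; exact div_neg_of_neg_of_pos (by linarith) hαα
  have hmneg : (m:ℝ) < 0 := by
    rw [← hm]; exact div_neg_of_neg_of_pos (by linarith) hββ
  have hn' : n < 0 := by exact_mod_cast hnneg
  have hm' : m < 0 := by exact_mod_cast hmneg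
  by_cases hn1 : n = -1
  · have h := hΦ.reflect_mem α hα β hβ
    rw [hn, hn1] at h
    norm_num at h
    rwa [add_comm]
  by_cases hm1 : m = -1
  · have h := hΦ.reflect_mem β hβ α hα
    rw [hm, hm1] at h
    norm_num at h
    exact h
  exfalso
  have hn2 : (n:ℝ) ≤ -2 := by exact_mod_cast (by omega : n ≤ -2)
  have hm2 : (m:ℝ) ≤ -2 := by exact_mod_cast (by omega : m ≤ -2)
  have e1 : 2 * ⟪β, α⟫ ≤ -2 * ⟪α, α⟫ := by
    have := (div_le_iff₀ hαα).1 (hn ▸ hn2 : 2 * ⟪β, α⟫ / ⟪α, α⟫ ≤ -2)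
    linarith
  have e2 : 2 * ⟪α, β⟫ ≤ -2 * ⟪β, β⟫ := by
    have := (div_le_iff₀ hββ).1 (hm ▸ hm2 : 2 * ⟪α, β⟫ / ⟪β, β⟫ ≤ -2)
    linarith
  have hab : ⟪α, β⟫ = ⟪β, α⟫ := real_inner_comm β α
  have hle : ⟪α + β, α + β⟫ ≤ 0 := by
    rw [real_inner_add_add_self]; linarith
  exact hne (by rwa [real_inner_self_nonpos] at hle)

lemma aux_pos_sum_ne_zero [DecidableEq V] {Φ pos : Set V} (hΦ : IsRootSystem Φ)
    (hpos : IsPositiveSystem Φ pos) :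
    ∀ (n : ℕ) (l : List V), l.length ≤ n → (∀ x ∈ l, x ∈ pos) → l ≠ [] →
      l.sum ≠ 0 := by
  intro n
  induction n with
  | zero =>
    intro l hl _ hne
    exact absurd (List.length_eq_zero_iff.1 (Nat.le_zero.1 hl)) hne
  | succ n ih =>
    rintro (_ | ⟨a, t⟩) hlen hmem hne hsum
    · exact hne rfl
    have ha : a ∈ pos := hmem a List.mem_cons_self
    have haΦ : a ∈ Φ := hpos.subset ha
    have haa : (0:ℝ) < ⟪a, a⟫ := aux_inner_self_pos (hΦ.ne_zero a haΦ)
    have hsum' : a + t.sum = 0 := by simpa using hsum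
    have hinner : ⟪a, a⟫ + ⟪a, t.sum⟫ = 0 := by
      have : ⟪a, a + t.sum⟫ = (0:ℝ) := by rw [hsum', inner_zero_right]
      rwa [inner_add_right] at this
    have hmap : ⟪a, t.sum⟫ = (t.map (fun x => ⟪a, x⟫)).sum := aux_inner_list_sum a t
    have hexists : ∃ y ∈ t, ⟪a, y⟫ < 0 := by
      by_contra h
      push_neg at h
      have h0 : 0 ≤ (t.map (fun x => ⟪a, x⟫)).sum := by
        apply List.sum_nonneg
        intro x hx
        obtain ⟨y, hy, rfl⟩ := List.mem_map.1 hx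
        exact h y hy
      rw [hmap] at hinner
      linarith
    obtain ⟨y, hyt, hay⟩ := hexists
    have hy : y ∈ pos := hmem y (List.mem_cons_of_mem _ hyt)
    have hyΦ : y ∈ Φ := hpos.subset hy
    have hane : a + y ≠ 0 := by
      intro h
      have hya : y = -a := by
        have := eq_neg_of_add_eq_zero_right h
        exact this
      exact hpos.not_both a ha (hya ▸ hy)
    have hsmem : a + y ∈ pos :=
      hpos.add_mem a ha y hy (aux_root_add hΦ haΦ hyΦ hay hane)
    have hperm : t.Perm (y :: t.erase y) := List.perm_cons_erase hyt
    have hts : t.sum = y + (t.erase y).sum := by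
      rw [hperm.sum_eq]; simp
    refine ih ((a + y) :: t.erase y) ?_ ?_ (List.cons_ne_nil _ _) ?_
    · have h1 : (t.erase y).length = t.length - 1 := List.length_erase_of_mem hyt
      have h2 : 1 ≤ t.length := List.length_pos_of_mem hyt
      simp only [List.length_cons] at hlen ⊢
      omega
    · rintro x hx
      rcases List.mem_cons.1 hx with rfl | hx
      · exact hsmem
      · exact hmem x (List.mem_cons_of_mem _ (List.mem_of_mem_erase hx))
    · rw [List.sum_cons]
      rw [List.sum_cons] at hsum
      rw [hts] at hsum
      rw [← hsum]
      abel

lemma aux_finset_pos_sum_ne_zero [DecidableEq V] {Φ pos : Set V} (hΦ : IsRootSystem Φ)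
    (hpos : IsPositiveSystem Φ pos) {ι : Type*} (t : Finset ι) (g : ι → V)
    (hg : ∀ i ∈ t, g i ∈ pos) (ht : t.Nonempty) : ∑ i ∈ t, g i ≠ 0 := by
  have hl : (t.toList.map g).sum = ∑ i ∈ t, g i := Finset.sum_map_toList t g
  intro h0
  refine aux_pos_sum_ne_zero hΦ hpos (t.toList.map g).length (t.toList.map g) le_rfl ?_ ?_
    (hl.trans h0)
  · intro x hx
    obtain ⟨i, hi, rfl⟩ := List.mem_map.1 hx
    exact hg i (Finset.mem_toList.1 hi)
  · intro h
    have h1 : t.toList = [] := by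
      cases hl2 : t.toList with
      | nil => rfl
      | cons a l => rw [hl2] at h; simp at h
    exact Finset.nonempty_iff_ne_empty.1 ht (Finset.toList_eq_nil.1 h1)

end AuxLemmas

set_option maxHeartbeats 1600000 in
/-- Tube-type uniqueness: two antichains `A, A'` in `Φ₁⁺` which are both
maximal-cardinality orthogonal subsets, consisting of long roots with nonnegative mutual
pairings, and with equal sums `Σ_{γ∈A} γ = Σ_{γ'∈A'} γ'`, must coincide. -/
theorem stmt11 {V : Type*} [NormedAddCommGroup V] [InnerProductSpace ℝ V]
    (Φ pos : Set V) (hΦ : IsRootSystem Φ) (hpos : IsPositiveSystem Φ pos)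
    (f : V →ₗ[ℝ] ℝ)
    (hf01 : ∀ β ∈ pos, f β = 0 ∨ f β = 1)
    (pos0 pos1 : Set V)
    (hpos0 : pos0 = {β ∈ pos | f β = 0})
    (hpos1 : pos1 = {β ∈ pos | f β = 1})
    (A A' : Finset V) (L : ℝ) (hL : 0 < L)
    (hmaxA : IsMaxOrthSubset pos1 A) (hmaxA' : IsMaxOrthSubset pos1 A')
    (hantiA : IsAntichainDom pos0 A) (hantiA' : IsAntichainDom pos0 A')
    (hlongA : ∀ γ ∈ A, ⟪γ, γ⟫ = L) (hlongA' : ∀ γ' ∈ A', ⟪γ', γ'⟫ = L)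
    (hnonneg : ∀ γ ∈ A, ∀ γ' ∈ A', 0 ≤ ⟪γ, γ'⟫)
    (hsum : ∑ γ ∈ A, γ = ∑ γ' ∈ A', γ') :
    A = A' := by
  classical
  have hposΦ : pos ⊆ Φ := hpos.subset
  have hp1pos : pos1 ⊆ pos := by rw [hpos1]; exact Set.sep_subset _ _
  have hp0pos : pos0 ⊆ pos := by rw [hpos0]; exact Set.sep_subset _ _
  have hApos1 : ∀ γ ∈ A, γ ∈ pos1 := fun γ hγ => hmaxA.1.1 hγ
  have hA'pos1 : ∀ γ ∈ A', γ ∈ pos1 := fun γ hγ => hmaxA'.1.1 hγ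
  have hAΦ : ∀ γ ∈ A, γ ∈ Φ := fun γ hγ => hposΦ (hp1pos (hApos1 γ hγ))
  have hA'Φ : ∀ γ ∈ A', γ ∈ Φ := fun γ hγ => hposΦ (hp1pos (hA'pos1 γ hγ))
  have hf1 : ∀ γ, γ ∈ pos1 → f γ = 1 := by
    intro γ hγ; rw [hpos1] at hγ; exact hγ.2
  have horthA : ∀ γ ∈ A, ∀ δ ∈ A, γ ≠ δ → ⟪γ, δ⟫ = 0 := hmaxA.1.2
  have horthA' : ∀ γ ∈ A', ∀ δ ∈ A', γ ≠ δ → ⟪γ, δ⟫ = 0 := hmaxA'.1.2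
  set B : Finset V := A \ A' with hBdef
  set B' : Finset V := A' \ A with hB'def
  have hBsub : ∀ γ ∈ B, γ ∈ A := fun γ hγ => (Finset.mem_sdiff.1 hγ).1
  have hBnot : ∀ γ ∈ B, γ ∉ A' := fun γ hγ => (Finset.mem_sdiff.1 hγ).2
  have hB'sub : ∀ γ ∈ B', γ ∈ A' := fun γ hγ => (Finset.mem_sdiff.1 hγ).1
  have hB'not : ∀ γ ∈ B', γ ∉ A := fun γ hγ => (Finset.mem_sdiff.1 hγ).2
  have hBlong : ∀ γ ∈ B, ⟪γ, γ⟫ = L := fun γ hγ => hlongA γ (hBsub γ hγ)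
  have hB'long : ∀ γ ∈ B', ⟪γ, γ⟫ = L := fun γ hγ => hlongA' γ (hB'sub γ hγ)
  -- equal sums over the symmetric differences
  have hsumB : ∑ γ ∈ B, γ = ∑ γ' ∈ B', γ' := by
    have h1 : ∑ x ∈ A \ (A ∩ A'), x + ∑ x ∈ A ∩ A', x = ∑ x ∈ A, x :=
      Finset.sum_sdiff Finset.inter_subset_left
    have h2 : ∑ x ∈ A' \ (A ∩ A'), x + ∑ x ∈ A ∩ A', x = ∑ x ∈ A', x :=
      Finset.sum_sdiff Finset.inter_subset_right
    rw [Finset.sdiff_inter_self_left] at h1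
    rw [Finset.sdiff_inter_self_right] at h2
    exact add_right_cancel (h1.trans (hsum.trans h2.symm))
  -- quantization of pairings
  have hpair : ∀ γ ∈ B, ∀ γ' ∈ B', ⟪γ, γ'⟫ = 0 ∨ ⟪γ, γ'⟫ = L / 2 := by
    intro γ hγ γ' hγ'
    obtain ⟨n, hn⟩ :=
      hΦ.crystallographic γ (hAΦ γ (hBsub γ hγ)) γ' (hA'Φ γ' (hB'sub γ' hγ'))
    rw [hBlong γ hγ] at hn
    have hcomm : ⟪γ, γ'⟫ = ⟪γ', γ⟫ := real_inner_comm γ' γ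
    have hip : ⟪γ', γ⟫ = (n : ℝ) * L / 2 := by
      field_simp at hn
      linarith
    have hnn : (0 : ℤ) ≤ n := by
      have h0 : (0:ℝ) ≤ ⟪γ, γ'⟫ := hnonneg γ (hBsub γ hγ) γ' (hB'sub γ' hγ')
      rw [hcomm, hip] at h0
      have : (0:ℝ) ≤ (n : ℝ) := by nlinarith
      exact_mod_cast this
    have hn2 : n < 2 := by
      by_contra h
      push_neg at h
      have h2 : (2:ℝ) ≤ (n : ℝ) := by exact_mod_cast h
      have hge : L ≤ ⟪γ', γ⟫ := by rw [hip]; nlinarith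
      have hsub : ⟪γ - γ', γ - γ'⟫ ≤ 0 := by
        rw [real_inner_sub_sub_self, hBlong γ hγ, hB'long γ' hγ']
        rw [hcomm]
        linarith
      have heq : γ = γ' := sub_eq_zero.1 (real_inner_self_nonpos.1 hsub)
      exact hBnot γ hγ (heq ▸ hB'sub γ' hγ')
    interval_cases n
    · left; rw [hcomm, hip]; norm_num
    · right; rw [hcomm, hip]; norm_num
  -- row sums
  have hrowB : ∀ γ ∈ B, ∑ γ' ∈ B', ⟪γ, γ'⟫ = L := by
    intro γ hγ
    have h1 : ⟪γ, ∑ γ' ∈ B', γ'⟫ = ∑ γ' ∈ B', ⟪γ, γ'⟫ := inner_sum B' (fun x => x) γ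
    rw [← hsumB, inner_sum B (fun x => x) γ] at h1
    rw [← h1]
    rw [Finset.sum_eq_single γ]
    · exact hBlong γ hγ
    · intro δ hδ hne
      exact horthA γ (hBsub γ hγ) δ (hBsub δ hδ) (Ne.symm hne)
    · intro h; exact absurd hγ h
  have hrowB' : ∀ γ' ∈ B', ∑ γ ∈ B, ⟪γ, γ'⟫ = L := by
    intro γ' hγ'
    have h1 : ⟪∑ γ ∈ B, γ, γ'⟫ = ∑ γ ∈ B, ⟪γ, γ'⟫ := sum_inner B (fun x => x) γ'
    rw [hsumB, sum_inner B' (fun x => x) γ'] at h1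
    rw [← h1]
    rw [Finset.sum_eq_single γ']
    · exact hB'long γ' hγ'
    · intro δ hδ hne
      exact horthA' δ (hB'sub δ hδ) γ' (hB'sub γ' hγ') hne
    · intro h; exact absurd hγ' h
  -- orientation of edges
  have hedge_sub : ∀ γ ∈ B, ∀ γ' ∈ B', ⟪γ, γ'⟫ ≠ 0 →
      (γ' - γ ∈ pos0 ∨ γ - γ' ∈ pos0) := by
    intro γ hγ γ' hγ' hne
    have hhalf : ⟪γ, γ'⟫ = L / 2 := (hpair γ hγ γ' hγ').resolve_left hne
    have hroot : γ' - γ ∈ Φ := by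
      have h := hΦ.reflect_mem γ (hAΦ γ (hBsub γ hγ)) γ' (hA'Φ γ' (hB'sub γ' hγ'))
      have hc : 2 * ⟪γ', γ⟫ / ⟪γ, γ⟫ = 1 := by
        rw [hBlong γ hγ, ← real_inner_comm γ' γ, hhalf]
        field_simp
      rw [hc, one_smul] at h
      exact h
    have hfv : f (γ' - γ) = 0 := by
      rw [map_sub, hf1 γ' (hA'pos1 γ' (hB'sub γ' hγ')), hf1 γ (hApos1 γ (hBsub γ hγ)),
        sub_self]
    rcases hpos.mem_or_neg_mem _ hroot with h | h
    · left; rw [hpos0]; exact ⟨h, hfv⟩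
    · right
      rw [neg_sub] at h
      rw [hpos0]
      refine ⟨h, ?_⟩
      have : f (γ - γ') = -f (γ' - γ) := by rw [map_sub, map_sub]; ring
      rw [this, hfv, neg_zero]
  have hnotboth : ∀ x, x ∈ pos0 → -x ∈ pos0 → False := fun x h1 h2 =>
    hpos.not_both x (hp0pos h1) (hp0pos h2)
  -- sink lemmas (antichain conditions force consistent orientation at every vertex)
  have hsinkB : ∀ γ ∈ B, (¬ ∀ γ' ∈ B', ⟪γ, γ'⟫ ≠ 0 → γ' - γ ∈ pos0) →
      ∀ γ' ∈ B', ⟪γ, γ'⟫ ≠ 0 → γ - γ' ∈ pos0 := by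
    intro γ hγ hnsrc γ'₁ hγ'₁ he₁
    push_neg at hnsrc
    obtain ⟨γ'₂, hγ'₂, he₂, hnp₂⟩ := hnsrc
    have hp₂ : γ - γ'₂ ∈ pos0 := (hedge_sub γ hγ γ'₂ hγ'₂ he₂).resolve_left hnp₂
    rcases hedge_sub γ hγ γ'₁ hγ'₁ he₁ with h | h
    · exfalso
      by_cases heq : γ'₁ = γ'₂
      · exact hnp₂ (heq ▸ h)
      · refine hantiA' γ'₂ (hB'sub γ'₂ hγ'₂) γ'₁ (hB'sub γ'₁ hγ'₁) (Ne.symm heq) ?_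
        refine ⟨[γ'₁ - γ, γ - γ'₂], ?_, ?_⟩
        · intro x hx
          simp only [List.mem_cons, List.mem_singleton, List.not_mem_nil, or_false] at hx
          rcases hx with rfl | rfl
          exacts [h, hp₂]
        · simp only [List.sum_cons, List.sum_nil, add_zero]
          all_goals abel
    · exact h
  have hsinkB' : ∀ γ' ∈ B', (¬ ∀ γ ∈ B, ⟪γ, γ'⟫ ≠ 0 → γ - γ' ∈ pos0) →
      ∀ γ ∈ B, ⟪γ, γ'⟫ ≠ 0 → γ' - γ ∈ pos0 := by
    intro γ' hγ' hnsrc γ₁ hγ₁ he₁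
    push_neg at hnsrc
    obtain ⟨γ₂, hγ₂, he₂, hnp₂⟩ := hnsrc
    have hp₂ : γ' - γ₂ ∈ pos0 := by
      rcases hedge_sub γ₂ hγ₂ γ' hγ' he₂ with h | h
      · exact h
      · exact absurd h hnp₂
    rcases hedge_sub γ₁ hγ₁ γ' hγ' he₁ with h | h
    · exact h
    · exfalso
      by_cases heq : γ₁ = γ₂
      · exact hnp₂ (heq ▸ h)
      · refine hantiA γ₂ (hBsub γ₂ hγ₂) γ₁ (hBsub γ₁ hγ₁) (Ne.symm heq) ?_
        refine ⟨[γ₁ - γ', γ' - γ₂], ?_, ?_⟩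
        · intro x hx
          simp only [List.mem_cons, List.mem_singleton, List.not_mem_nil, or_false] at hx
          rcases hx with rfl | rfl
          exacts [h, hp₂]
        · simp only [List.sum_cons, List.sum_nil, add_zero]
          all_goals abel
  -- signs
  set Src : V → Prop := fun γ => ∀ γ' ∈ B', ⟪γ, γ'⟫ ≠ 0 → γ' - γ ∈ pos0 with hSrc
  set Src' : V → Prop := fun γ' => ∀ γ ∈ B, ⟪γ, γ'⟫ ≠ 0 → γ - γ' ∈ pos0 with hSrc'
  set s : V → ℝ := fun γ => if Src γ then 1 else -1 with hs
  set s' : V → ℝ := fun γ' => if Src' γ' then 1 else -1 with hs'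
  have hsv1 : ∀ x, Src x → s x = 1 := by
    intro x h; rw [hs]; simp only []; rw [if_pos h]
  have hsv2 : ∀ x, ¬ Src x → s x = -1 := by
    intro x h; rw [hs]; simp only []; rw [if_neg h]
  have hs'v1 : ∀ x, Src' x → s' x = 1 := by
    intro x h; rw [hs']; simp only []; rw [if_pos h]
  have hs'v2 : ∀ x, ¬ Src' x → s' x = -1 := by
    intro x h; rw [hs']; simp only []; rw [if_neg h]
  have hs_sq : ∀ x, s x * s x = 1 := by
    intro x
    by_cases h : Src x
    · rw [hsv1 x h]; norm_num
    · rw [hsv2 x h]; norm_num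
  have hs'_sq : ∀ x, s' x * s' x = 1 := by
    intro x
    by_cases h : Src' x
    · rw [hs'v1 x h]; norm_num
    · rw [hs'v2 x h]; norm_num
  have hsign : ∀ γ ∈ B, ∀ γ' ∈ B', ⟪γ, γ'⟫ ≠ 0 → s' γ' = -s γ := by
    intro γ hγ γ' hγ' he
    by_cases h : Src γ
    · have h1 : γ' - γ ∈ pos0 := h γ' hγ' he
      have h2 : ¬ Src' γ' := by
        intro h'
        exact hnotboth _ h1 (by rw [neg_sub]; exact h' γ hγ he)
      rw [hsv1 γ h, hs'v2 γ' h2]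
    · have h1 : γ - γ' ∈ pos0 := hsinkB γ hγ h γ' hγ' he
      have h2 : Src' γ' := by
        by_contra h'
        exact hnotboth _ h1 (by rw [neg_sub]; exact hsinkB' γ' hγ' h' γ hγ he)
      rw [hs'v1 γ' h2, hsv2 γ h]; norm_num
  have hterm : ∀ γ ∈ B, ∀ γ' ∈ B', ⟪γ, γ'⟫ ≠ 0 →
      (-(s' γ')) • γ' - (s γ) • γ ∈ pos0 := by
    intro γ hγ γ' hγ' he
    have h2 : s' γ' = -s γ := hsign γ hγ γ' hγ' he
    by_cases h : Src γ
    · have hv : s γ = 1 := hsv1 γ h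
      have e : (-(s' γ')) • γ' - (s γ) • γ = γ' - γ := by
        rw [h2, hv]; module
      rw [e]; exact h γ' hγ' he
    · have hv : s γ = -1 := hsv2 γ h
      have e : (-(s' γ')) • γ' - (s γ) • γ = γ - γ' := by
        rw [h2, hv]; module
      rw [e]; exact hsinkB γ hγ h γ' hγ' he
  -- the vectors u, u'
  set u : V := ∑ γ ∈ B, s γ • γ with hu
  set u' : V := ∑ γ' ∈ B', s' γ' • γ' with hu'
  have hnormu : ⟪u, u⟫ = (B.card : ℝ) * L := by
    have hterm1 : ∀ γ ∈ B, ⟪s γ • γ, u⟫ = L := by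
      intro γ hγ
      rw [hu, inner_sum]
      rw [Finset.sum_eq_single γ]
      · rw [real_inner_smul_left, real_inner_smul_right, hBlong γ hγ, ← mul_assoc,
          hs_sq, one_mul]
      · intro δ hδ hne
        rw [real_inner_smul_left, real_inner_smul_right,
          horthA γ (hBsub γ hγ) δ (hBsub δ hδ) (Ne.symm hne)]
        ring
      · intro h; exact absurd hγ h
    rw [hu, sum_inner, Finset.sum_congr rfl hterm1, Finset.sum_const, nsmul_eq_mul]
  have hnormu' : ⟪u', u'⟫ = (B'.card : ℝ) * L := by
    have hterm1 : ∀ γ ∈ B', ⟪s' γ • γ, u'⟫ = L := by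
      intro γ hγ
      rw [hu', inner_sum]
      rw [Finset.sum_eq_single γ]
      · rw [real_inner_smul_left, real_inner_smul_right, hB'long γ hγ, ← mul_assoc,
          hs'_sq, one_mul]
      · intro δ hδ hne
        rw [real_inner_smul_left, real_inner_smul_right,
          horthA' γ (hB'sub γ hγ) δ (hB'sub δ hδ) (Ne.symm hne)]
        ring
      · intro h; exact absurd hγ h
    rw [hu', sum_inner, Finset.sum_congr rfl hterm1, Finset.sum_const, nsmul_eq_mul]
  have hcross : ⟪u, u'⟫ = -((B.card : ℝ) * L) := by
    have hterm1 : ∀ γ ∈ B, ⟪s γ • γ, u'⟫ = -L := by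
      intro γ hγ
      rw [real_inner_smul_left, hu', inner_sum]
      have h1 : ∀ γ' ∈ B', ⟪γ, s' γ' • γ'⟫ = (-(s γ)) * ⟪γ, γ'⟫ := by
        intro γ' hγ'
        rw [real_inner_smul_right]
        by_cases he : ⟪γ, γ'⟫ = 0
        · rw [he]; ring
        · rw [hsign γ hγ γ' hγ' he]
      rw [Finset.sum_congr rfl h1, ← Finset.mul_sum, hrowB γ hγ]
      rw [show s γ * (-(s γ) * L) = -((s γ * s γ) * L) by ring, hs_sq, one_mul]
    rw [hu, sum_inner, Finset.sum_congr rfl hterm1, Finset.sum_const, nsmul_eq_mul]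
    ring
  have hcross' : ⟪u, u'⟫ = -((B'.card : ℝ) * L) := by
    have hterm1 : ∀ γ' ∈ B', ⟪u, s' γ' • γ'⟫ = -L := by
      intro γ' hγ'
      rw [real_inner_smul_right, hu, sum_inner]
      have h1 : ∀ γ ∈ B, ⟪s γ • γ, γ'⟫ = (-(s' γ')) * ⟪γ, γ'⟫ := by
        intro γ hγ
        rw [real_inner_smul_left]
        by_cases he : ⟪γ, γ'⟫ = 0
        · rw [he]; ring
        · rw [show s γ = -s' γ' by rw [hsign γ hγ γ' hγ' he]; ring]
      rw [Finset.sum_congr rfl h1, ← Finset.mul_sum, hrowB' γ' hγ']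
      rw [show s' γ' * (-(s' γ') * L) = -((s' γ' * s' γ') * L) by ring, hs'_sq, one_mul]
    rw [hu', inner_sum, Finset.sum_congr rfl hterm1, Finset.sum_const, nsmul_eq_mul]
    ring
  have huu0 : u + u' = 0 := by
    have hc2 : 2 * ⟪u, u'⟫ = -((B.card : ℝ) * L) + -((B'.card : ℝ) * L) := by
      rw [two_mul]
      nth_rewrite 1 [hcross]
      rw [hcross']
    have h2 : ⟪u + u', u + u'⟫ = (0:ℝ) := by
      rw [real_inner_add_add_self, hnormu, hnormu', hc2]
      ring
    exact inner_self_eq_zero.1 h2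
  have hu'eq : u' = -u := by
    have := eq_neg_of_add_eq_zero_right huu0
    exact this
  -- the edge-sum vector
  set g : V × V → V :=
    fun p => (2 * ⟪p.1, p.2⟫ / L) • ((-(s' p.2)) • p.2 - (s p.1) • p.1) with hg
  have hgsum : ∑ p ∈ B ×ˢ B', g p = 0 := by
    rw [Finset.sum_product]
    have hstep : ∀ γ ∈ B, ∑ γ' ∈ B', g (γ, γ')
        = (∑ γ' ∈ B', (2 * ⟪γ, γ'⟫ / L) • ((-(s' γ')) • γ')) - (2:ℝ) • ((s γ) • γ) := by
      intro γ hγ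
      have h1 : ∀ γ' ∈ B', g (γ, γ')
          = (2 * ⟪γ, γ'⟫ / L) • ((-(s' γ')) • γ') - (2 * ⟪γ, γ'⟫ / L) • ((s γ) • γ) := by
        intro γ' _
        rw [hg]
        exact smul_sub _ _ _
      rw [Finset.sum_congr rfl h1, Finset.sum_sub_distrib]
      congr 1
      rw [← Finset.sum_smul]
      congr 1
      have : ∑ γ' ∈ B', 2 * ⟪γ, γ'⟫ / L = 2 * (∑ γ' ∈ B', ⟪γ, γ'⟫) / L := by
        rw [Finset.mul_sum, Finset.sum_div]
      rw [this, hrowB γ hγ]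
      field_simp
    rw [Finset.sum_congr rfl hstep, Finset.sum_sub_distrib]
    have hA1 : ∑ γ ∈ B, ∑ γ' ∈ B', (2 * ⟪γ, γ'⟫ / L) • ((-(s' γ')) • γ')
        = (2:ℝ) • (-u') := by
      rw [Finset.sum_comm]
      have h2 : ∀ γ' ∈ B', ∑ γ ∈ B, (2 * ⟪γ, γ'⟫ / L) • ((-(s' γ')) • γ')
          = (2:ℝ) • ((-(s' γ')) • γ') := by
        intro γ' hγ'
        rw [← Finset.sum_smul]
        congr 1
        have : ∑ γ ∈ B, 2 * ⟪γ, γ'⟫ / L = 2 * (∑ γ ∈ B, ⟪γ, γ'⟫) / L := by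
          rw [Finset.mul_sum, Finset.sum_div]
        rw [this, hrowB' γ' hγ']
        field_simp
      rw [Finset.sum_congr rfl h2, ← Finset.smul_sum]
      congr 1
      rw [hu', ← Finset.sum_neg_distrib]
      exact Finset.sum_congr rfl fun x _ => by rw [neg_smul]
    have hA2 : ∑ γ ∈ B, (2:ℝ) • ((s γ) • γ) = (2:ℝ) • u := by
      rw [hu, Finset.smul_sum]
    rw [hA1, hA2, hu'eq]
    simp
  -- B is empty
  have hBempty : B = ∅ := by
    by_contra hBne
    obtain ⟨γ₀, hγ₀⟩ := Finset.nonempty_iff_ne_empty.2 hBne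
    have hedge : ∃ γ' ∈ B', ⟪γ₀, γ'⟫ ≠ 0 := by
      by_contra h
      push_neg at h
      have h0 : ∑ γ' ∈ B', ⟪γ₀, γ'⟫ = 0 := Finset.sum_eq_zero h
      rw [hrowB γ₀ hγ₀] at h0
      exact absurd h0 (ne_of_gt hL)
    obtain ⟨γ'₀, hγ'₀, he₀⟩ := hedge
    have hgzero : ∀ p ∈ B ×ˢ B', g p ≠ 0 → ⟪p.1, p.2⟫ ≠ 0 := by
      intro p _ hgp he
      apply hgp
      rw [hg]
      simp only [he]
      norm_num
    have hEsum : ∑ p ∈ (B ×ˢ B').filter (fun p => ⟪p.1, p.2⟫ ≠ 0), g p = 0 := by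
      rw [Finset.sum_filter_of_ne hgzero]
      exact hgsum
    have hgpos : ∀ p ∈ (B ×ˢ B').filter (fun p => ⟪p.1, p.2⟫ ≠ 0), g p ∈ pos := by
      intro p hp
      rw [Finset.mem_filter] at hp
      obtain ⟨hpm, hpe⟩ := hp
      rw [Finset.mem_product] at hpm
      have hhalf : ⟪p.1, p.2⟫ = L / 2 := (hpair p.1 hpm.1 p.2 hpm.2).resolve_left hpe
      have hc1 : 2 * ⟪p.1, p.2⟫ / L = 1 := by rw [hhalf]; field_simp
      apply hp0pos
      have := hterm p.1 hpm.1 p.2 hpm.2 hpe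
      rw [hg]
      simp only [hc1, one_smul]
      exact this
    have hEne : ((B ×ˢ B').filter (fun p => ⟪p.1, p.2⟫ ≠ 0)).Nonempty := by
      refine ⟨(γ₀, γ'₀), ?_⟩
      rw [Finset.mem_filter, Finset.mem_product]
      exact ⟨⟨hγ₀, hγ'₀⟩, he₀⟩
    exact aux_finset_pos_sum_ne_zero hΦ hpos _ g hgpos hEne hEsum
  -- B' is empty
  have hB'empty : B' = ∅ := by
    by_contra hB'ne
    have hne' : B'.Nonempty := Finset.nonempty_iff_ne_empty.2 hB'ne
    have h0 : ∑ γ' ∈ B', γ' = 0 := by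
      rw [← hsumB, hBempty]
      simp
    exact aux_finset_pos_sum_ne_zero hΦ hpos B' (fun x => x)
      (fun γ' hγ' => hp1pos (hA'pos1 γ' (hB'sub γ' hγ'))) hne' h0
  exact Finset.Subset.antisymm (Finset.sdiff_eq_empty_iff_subset.1 hBempty)
    (Finset.sdiff_eq_empty_iff_subset.1 hB'empty)
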